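/- arXiv:1308.4322 — 3 statements merged into one kernel-verified Lean document; each statement's English description precedes it below -/
import Mathlib

section
/- For all real α, β > -1 and nonnegative integer k, the modified moment M_k(α,β) = ∫_{-1}^{1} (1-x)^α (1+x)^β T_k(x) dx satisfies the three-term recurrence (β+α+k+2)·M_{k+1}(α,β) + 2(α-β)·M_k(α,β) + (β+α-k+2)·M_{k-1}(α,β) = 0 for k ≥ 1. -/
open Polynomial Polynomial.Chebyshev MeasureTheory intervalIntegral

/-- The modified moment `M_k(α,β) = ∫_{-1}^1 (1-x)^α (1+x)^β T_k(x) dx`. -/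
noncomputable def modMoment (α β : ℝ) (k : ℕ) : ℝ :=
  ∫ x in (-1:ℝ)..1, (1 - x) ^ α * (1 + x) ^ β * (Polynomial.Chebyshev.T ℝ k).eval x

/-- The weight times a continuous function is interval integrable on `[-1,1]`. -/
lemma weight_mul_integrable (α β : ℝ) (hα : -1 < α) (hβ : -1 < β) {g : ℝ → ℝ}
    (hg : Continuous g) :
    IntervalIntegrable (fun x => (1 - x) ^ α * (1 + x) ^ β * g x) volume (-1) 1 := by
  apply IntervalIntegrable.trans (b := 0)
  · -- on [-1, 0]
    have h1 : IntervalIntegrable (fun x : ℝ => (1 + x) ^ β) volume (-1) 0 := by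
      have := (intervalIntegrable_rpow' (a := 0) (b := 1) hβ).comp_add_left 1
      norm_num at this
      exact this
    have h2 : ContinuousOn (fun x : ℝ => (1 - x) ^ α * g x) (Set.uIcc (-1 : ℝ) 0) := by
      apply ContinuousOn.mul _ hg.continuousOn
      apply ContinuousOn.rpow_const (by fun_prop)
      intro x hx
      rw [Set.uIcc_of_le (by norm_num)] at hx
      left
      have := hx.2
      intro h
      nlinarith [hx.2]
    have h3 := h1.continuousOn_mul h2
    have heq : (fun x : ℝ => (1 - x) ^ α * (1 + x) ^ β * g x)
        = fun x : ℝ => ((1 - x) ^ α * g x) * (1 + x) ^ β := by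
      funext x; ring
    rw [heq]; exact h3
  · -- on [0, 1]
    have h1 : IntervalIntegrable (fun x : ℝ => (1 - x) ^ α) volume 0 1 := by
      have := ((intervalIntegrable_rpow' (a := 0) (b := 1) hα).comp_sub_left 1).symm
      norm_num at this
      exact this
    have h2 : ContinuousOn (fun x : ℝ => (1 + x) ^ β * g x) (Set.uIcc (0 : ℝ) 1) := by
      apply ContinuousOn.mul _ hg.continuousOn
      apply ContinuousOn.rpow_const (by fun_prop)
      intro x hx
      rw [Set.uIcc_of_le (by norm_num)] at hx
      left
      nlinarith [hx.1]
    have h3 := h1.mul_continuousOn h2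
    have heq : (fun x : ℝ => (1 - x) ^ α * (1 + x) ^ β * g x)
        = fun x : ℝ => (1 - x) ^ α * ((1 + x) ^ β * g x) := by
      funext x; ring
    rw [heq]; exact h3

/-- The key derivative computation. -/
lemma weight_T_hasDerivAt (α β : ℝ) (n : ℤ) {x : ℝ} (hx : x ∈ Set.Ioo (-1 : ℝ) 1) :
    HasDerivAt (fun y => (1 - y) ^ (α + 1) * (1 + y) ^ (β + 1) * (T ℝ n).eval y)
      ((1 - x) ^ α * (1 + x) ^ β *
        (-(1/2) * ((β + α + n + 2) * (T ℝ (n + 1)).eval x + 2 * (α - β) * (T ℝ n).eval x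
          + (β + α + 2 - n) * (T ℝ (n - 1)).eval x))) x := by
  obtain ⟨hx1, hx2⟩ := hx
  have h1x : (0 : ℝ) < 1 - x := by linarith
  have h2x : (0 : ℝ) < 1 + x := by linarith
  have hA : HasDerivAt (fun y : ℝ => (1 - y) ^ (α + 1)) (-((α + 1) * (1 - x) ^ α)) x := by
    have h := (Real.hasDerivAt_rpow_const (x := 1 - x) (p := α + 1) (Or.inl h1x.ne')).comp
      x ((hasDerivAt_id x).const_sub 1)
    simpa [add_sub_cancel_right, mul_comm, Function.comp_def] using h
  have hB : HasDerivAt (fun y : ℝ => (1 + y) ^ (β + 1)) ((β + 1) * (1 + x) ^ β) x := by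
    have h := (Real.hasDerivAt_rpow_const (x := 1 + x) (p := β + 1) (Or.inl h2x.ne')).comp
      x ((hasDerivAt_id x).const_add 1)
    simpa [add_sub_cancel_right, mul_comm, Function.comp_def] using h
  have hC : HasDerivAt (fun y : ℝ => (T ℝ n).eval y) ((derivative (T ℝ n)).eval x) x :=
    Polynomial.hasDerivAt _ x
  have h := (hA.mul hB).mul hC
  refine h.congr_deriv (Eq.symm ?_)
  simp only [Pi.mul_apply]
  -- now an algebraic identity
  have hkey : ((1 : ℝ) - x ^ 2) * (derivative (T ℝ n)).eval x
      = (n : ℝ) * ((T ℝ (n - 1)).eval x - x * (T ℝ n).eval x) := by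
    have := congrArg (Polynomial.eval x)
      (one_sub_X_sq_mul_derivative_T_eq_poly_in_T (R := ℝ) (n - 1))
    simpa using this
  have hrec : (T ℝ (n + 1)).eval x = 2 * x * (T ℝ n).eval x - (T ℝ (n - 1)).eval x := by
    have := congrArg (Polynomial.eval x) (T_add_one ℝ n)
    simpa using this
  have hp : (1 - x) ^ (α + 1) = (1 - x) ^ α * (1 - x) := by
    rw [Real.rpow_add_one h1x.ne']
  have hq : (1 + x) ^ (β + 1) = (1 + x) ^ β * (1 + x) := by
    rw [Real.rpow_add_one h2x.ne']
  rw [hp, hq, hrec]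
  linear_combination (-((1 - x) ^ α * (1 + x) ^ β)) * hkey

theorem modMoment_recurrence (α β : ℝ) (hα : -1 < α) (hβ : -1 < β) (k : ℕ) (hk : 1 ≤ k) :
    (β + α + k + 2) * modMoment α β (k + 1) + 2 * (α - β) * modMoment α β k
      + (β + α - k + 2) * modMoment α β (k - 1) = 0 := by
  set n : ℤ := (k : ℤ) with hn
  set w : ℝ → ℝ := fun x => (1 - x) ^ α * (1 + x) ^ β with hw
  have hint : ∀ m : ℤ, IntervalIntegrable (fun x => w x * (T ℝ m).eval x) volume (-1) 1 :=
    fun m => weight_mul_integrable α β hα hβ (T ℝ m).continuous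
  have hcont : ContinuousOn
      (fun y => (1 - y) ^ (α + 1) * (1 + y) ^ (β + 1) * (T ℝ n).eval y)
      (Set.Icc (-1 : ℝ) 1) := by
    apply ContinuousOn.mul (ContinuousOn.mul ?_ ?_) (T ℝ n).continuous.continuousOn
    · exact ContinuousOn.rpow_const (by fun_prop) fun x _ => Or.inr (by linarith)
    · exact ContinuousOn.rpow_const (by fun_prop) fun x _ => Or.inr (by linarith)
  have hderiv : ∀ x ∈ Set.Ioo (-1 : ℝ) 1,
      HasDerivAt (fun y => (1 - y) ^ (α + 1) * (1 + y) ^ (β + 1) * (T ℝ n).eval y)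
        (w x * (-(1/2) * ((β + α + n + 2) * (T ℝ (n + 1)).eval x
          + 2 * (α - β) * (T ℝ n).eval x + (β + α + 2 - n) * (T ℝ (n - 1)).eval x))) x :=
    fun x hx => weight_T_hasDerivAt α β n hx
  have hintd : IntervalIntegrable (fun x => w x * (-(1/2) * ((β + α + n + 2) * (T ℝ (n + 1)).eval x
      + 2 * (α - β) * (T ℝ n).eval x + (β + α + 2 - n) * (T ℝ (n - 1)).eval x))) volume (-1) 1 := by
    apply weight_mul_integrable α β hα hβ
    have h1 := (T ℝ (n + 1)).continuous
    have h2 := (T ℝ n).continuous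
    have h3 := (T ℝ (n - 1)).continuous
    fun_prop
  have hftc := integral_eq_sub_of_hasDerivAt_of_le (by norm_num) hcont hderiv hintd
  have hz : ((1 : ℝ) - 1) ^ (α + 1) * (1 + 1) ^ (β + 1) * (T ℝ n).eval 1
      - (1 - (-1 : ℝ)) ^ (α + 1) * (1 + (-1)) ^ (β + 1) * (T ℝ n).eval (-1) = 0 := by
    rw [sub_self, add_neg_cancel, Real.zero_rpow (by linarith), Real.zero_rpow (by linarith)]
    ring
  rw [hz] at hftc
  -- split the integral
  have hfun : (fun x => w x * (-(1/2) * ((β + α + n + 2) * (T ℝ (n + 1)).eval x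
      + 2 * (α - β) * (T ℝ n).eval x + (β + α + 2 - n) * (T ℝ (n - 1)).eval x)))
      = fun x => (-(1/2) * (β + α + n + 2)) * (w x * (T ℝ (n + 1)).eval x)
        + (-(1/2) * (2 * (α - β))) * (w x * (T ℝ n).eval x)
        + (-(1/2) * (β + α + 2 - n)) * (w x * (T ℝ (n - 1)).eval x) := by
    funext x; ring
  rw [hfun, integral_add (((hint (n + 1)).const_mul _).add ((hint n).const_mul _))
      ((hint (n - 1)).const_mul _),
    integral_add ((hint (n + 1)).const_mul _) ((hint n).const_mul _),
    intervalIntegral.integral_const_mul, intervalIntegral.integral_const_mul,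
    intervalIntegral.integral_const_mul] at hftc
  -- identify with modMoment
  have e1 : modMoment α β (k + 1) = ∫ x in (-1 : ℝ)..1, w x * (T ℝ (n + 1)).eval x := by
    have : ((k + 1 : ℕ) : ℤ) = n + 1 := by omega
    simp only [modMoment, this, hw]
  have e2 : modMoment α β k = ∫ x in (-1 : ℝ)..1, w x * (T ℝ n).eval x := rfl
  have e3 : modMoment α β (k - 1) = ∫ x in (-1 : ℝ)..1, w x * (T ℝ (n - 1)).eval x := by
    have : ((k - 1 : ℕ) : ℤ) = n - 1 := by omega
    simp only [modMoment, this, hw]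
  rw [e1, e2, e3]
  have hcast : ((n : ℝ)) = (k : ℝ) := by push_cast [hn]; ring
  rw [hcast] at hftc
  linear_combination (-2 : ℝ) * hftc
end

section
/- Let α > -1/2 and β = -1/2. Then |M_m(α,-1/2)| = |∫_{-1}^{1}(1-x)^α(1+x)^{-1/2} T_m(x)dx| = O(m^{-2-2α}) as m → ∞ when α < 1/2, in the sense that there is C with |M_m(α,-1/2)| ≤ C m^{-2-2α} for all m ≥ 1. -/
open Real Set MeasureTheory intervalIntegral

noncomputable def hh (p x : ℝ) : ℝ := |Real.sin (x/2)| ^ p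
noncomputable def hh1 (p x : ℝ) : ℝ :=
  Real.cos (x/2) * (1/2) * p * Real.sin (x/2) ^ (p-1)
noncomputable def hh2 (p x : ℝ) : ℝ :=
  p/4 * ((p-1) * Real.sin (x/2) ^ (p-2) * Real.cos (x/2) ^ 2 - Real.sin (x/2) ^ p)
noncomputable def hh3 (p x : ℝ) : ℝ :=
  p/8 * Real.cos (x/2) * ((p-1)*(p-2) * Real.sin (x/2) ^ (p-3) * Real.cos (x/2) ^ 2
    - (3*p-2) * Real.sin (x/2) ^ (p-1))

lemma hh_periodic (p : ℝ) : Function.Periodic (hh p) (2*Real.pi) := by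
  intro x
  simp only [hh]
  rw [show (x + 2*Real.pi)/2 = x/2 + Real.pi by ring, Real.sin_add_pi, abs_neg]

lemma hh_cont (p : ℝ) (hp : 0 ≤ p) : Continuous (hh p) := by
  apply Continuous.rpow_const
  · exact continuous_abs.comp (Real.continuous_sin.comp (continuous_id.div_const 2))
  · exact fun x => Or.inr hp

lemma hh_nonneg (p x : ℝ) : 0 ≤ hh p x := Real.rpow_nonneg (abs_nonneg _) _

lemma hh_le_one (p x : ℝ) (hp : 0 ≤ p) : hh p x ≤ 1 :=
  Real.rpow_le_one (abs_nonneg _) (abs_sin_le_one _) hp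

lemma hh_le (p x c : ℝ) (hp : 0 ≤ p) (hx : |Real.sin (x/2)| ≤ c) : hh p x ≤ c ^ p :=
  Real.rpow_le_rpow (abs_nonneg _) hx hp

lemma hasDerivAt_half_sin (x : ℝ) :
    HasDerivAt (fun y : ℝ => Real.sin (y/2)) (Real.cos (x/2) * (1/2)) x := by
  simpa [Function.comp_def] using (Real.hasDerivAt_sin (x/2)).comp x ((hasDerivAt_id x).div_const 2)

lemma sin_half_pos {x : ℝ} (hx : x ∈ Set.Ioo 0 (2*Real.pi)) : 0 < Real.sin (x/2) := by
  apply Real.sin_pos_of_pos_of_lt_pi (by linarith [hx.1]) (by linarith [hx.2])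

lemma hh_eventually (p : ℝ) {x : ℝ} (hx : x ∈ Set.Ioo 0 (2*Real.pi)) :
    hh p =ᶠ[nhds x] fun y => Real.sin (y/2) ^ p := by
  have hopen : IsOpen {y : ℝ | 0 < Real.sin (y/2)} :=
    isOpen_lt continuous_const (Real.continuous_sin.comp (continuous_id.div_const 2))
  filter_upwards [hopen.mem_nhds (sin_half_pos hx)] with y hy
  simp [hh, abs_of_pos hy]

lemma hasDerivAt_hh (p : ℝ) {x : ℝ} (hx : x ∈ Set.Ioo 0 (2*Real.pi)) :
    HasDerivAt (hh p) (hh1 p x) x := by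
  have h := (hasDerivAt_half_sin x).rpow_const (p := p) (Or.inl (sin_half_pos hx).ne')
  exact h.congr_of_eventuallyEq (hh_eventually p hx)

lemma hasDerivAt_hh1 (p : ℝ) {x : ℝ} (hx : x ∈ Set.Ioo 0 (2*Real.pi)) :
    HasDerivAt (hh1 p) (hh2 p x) x := by
  have hs := sin_half_pos hx
  have h1 : HasDerivAt (fun y : ℝ => Real.sin (y/2) ^ (p-1))
      (Real.cos (x/2) * (1/2) * (p-1) * Real.sin (x/2) ^ (p-1-1)) x :=
    (hasDerivAt_half_sin x).rpow_const (Or.inl hs.ne')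
  have h2 : HasDerivAt (fun y : ℝ => Real.cos (y/2)) (-Real.sin (x/2) * (1/2)) x := by
    simpa [Function.comp_def] using (Real.hasDerivAt_cos (x/2)).comp x ((hasDerivAt_id x).div_const 2)
  have h3 : HasDerivAt (fun y : ℝ => Real.cos (y/2) * (1/2) * p * Real.sin (y/2) ^ (p-1))
      ((-Real.sin (x/2) * (1/2)) * (1/2) * p * Real.sin (x/2) ^ (p-1)
        + Real.cos (x/2) * (1/2) * p * (Real.cos (x/2) * (1/2) * (p-1) * Real.sin (x/2) ^ (p-1-1))) x := by
    simpa [Pi.mul_def, mul_comm, mul_assoc, mul_left_comm] using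
      (((h2.mul_const (1/2)).mul_const p).mul h1)
  have heq : (-Real.sin (x/2) * (1/2)) * (1/2) * p * Real.sin (x/2) ^ (p-1)
        + Real.cos (x/2) * (1/2) * p * (Real.cos (x/2) * (1/2) * (p-1) * Real.sin (x/2) ^ (p-1-1))
      = hh2 p x := by
    have e1 : Real.sin (x/2) ^ p = Real.sin (x/2) ^ (p-1) * Real.sin (x/2) := by
      rw [← Real.rpow_add_one hs.ne' (p-1)]; ring_nf
    have e2 : Real.sin (x/2) ^ (p-1) = Real.sin (x/2) ^ (p-2) * Real.sin (x/2) := by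
      rw [← Real.rpow_add_one hs.ne' (p-2)]; ring_nf
    simp only [hh2, e1, show p-1-1 = p-2 by ring]
    ring
  exact heq ▸ h3

lemma hasDerivAt_hh2 (p : ℝ) {x : ℝ} (hx : x ∈ Set.Ioo 0 (2*Real.pi)) :
    HasDerivAt (hh2 p) (hh3 p x) x := by
  have hs := sin_half_pos hx
  have hps : HasDerivAt (fun y : ℝ => Real.sin (y/2) ^ p)
      (Real.cos (x/2) * (1/2) * p * Real.sin (x/2) ^ (p-1)) x :=
    (hasDerivAt_half_sin x).rpow_const (Or.inl hs.ne')
  have h1 : HasDerivAt (fun y : ℝ => Real.sin (y/2) ^ (p-2))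
      (Real.cos (x/2) * (1/2) * (p-2) * Real.sin (x/2) ^ (p-2-1)) x :=
    (hasDerivAt_half_sin x).rpow_const (Or.inl hs.ne')
  have h2 : HasDerivAt (fun y : ℝ => Real.cos (y/2)) (-Real.sin (x/2) * (1/2)) x := by
    simpa [Function.comp_def] using (Real.hasDerivAt_cos (x/2)).comp x ((hasDerivAt_id x).div_const 2)
  have h2sq : HasDerivAt (fun y : ℝ => Real.cos (y/2) ^ 2)
      (2 * Real.cos (x/2) * (-Real.sin (x/2) * (1/2))) x := by
    have := h2.mul h2
    rw [show (-Real.sin (x/2) * (1/2)) * Real.cos (x/2) + Real.cos (x/2) * (-Real.sin (x/2) * (1/2))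
        = 2 * Real.cos (x/2) * (-Real.sin (x/2) * (1/2)) by ring] at this
    simpa [Pi.mul_def, pow_two] using this
  have h3 : HasDerivAt (fun y : ℝ => (p-1) * Real.sin (y/2) ^ (p-2) * Real.cos (y/2) ^ 2)
      ((p-1) * (Real.cos (x/2) * (1/2) * (p-2) * Real.sin (x/2) ^ (p-2-1)) * Real.cos (x/2) ^ 2
        + (p-1) * Real.sin (x/2) ^ (p-2) * (2 * Real.cos (x/2) * (-Real.sin (x/2) * (1/2)))) x := by
    simpa [Pi.mul_def, mul_assoc] using ((h1.const_mul (p-1)).mul h2sq)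
  have h4 := ((h3.sub hps).const_mul (p/4))
  have heq : p/4 * ((p-1) * (Real.cos (x/2) * (1/2) * (p-2) * Real.sin (x/2) ^ (p-2-1)) * Real.cos (x/2) ^ 2
        + (p-1) * Real.sin (x/2) ^ (p-2) * (2 * Real.cos (x/2) * (-Real.sin (x/2) * (1/2)))
        - Real.cos (x/2) * (1/2) * p * Real.sin (x/2) ^ (p-1)) = hh3 p x := by
    have e2 : Real.sin (x/2) ^ (p-1) = Real.sin (x/2) ^ (p-2) * Real.sin (x/2) := by
      rw [← Real.rpow_add_one hs.ne' (p-2)]; ring_nf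
    have e3 : Real.sin (x/2) ^ (p-2) = Real.sin (x/2) ^ (p-3) * Real.sin (x/2) := by
      rw [← Real.rpow_add_one hs.ne' (p-3)]; ring_nf
    simp only [hh3, show p-2-1 = p-3 by ring, e2, e3]
    ring
  have : HasDerivAt (hh2 p) (hh3 p x) x := by
    rw [← heq]; exact h4
  exact this

noncomputable def Kp (p : ℝ) : ℝ := p/8 * (|(p-1)*(p-2)| + |3*p-2|)

lemma Kp_nonneg {p : ℝ} (hp : 0 < p) : 0 ≤ Kp p := by
  have := abs_nonneg ((p-1)*(p-2)); have := abs_nonneg (3*p-2)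
  unfold Kp; nlinarith

lemma hh3_bound {p x : ℝ} (hp : 0 < p) (hx : x ∈ Set.Ioo 0 (2*Real.pi)) :
    |hh3 p x| ≤ Kp p * Real.sin (x/2) ^ (p-3) := by
  have hs := sin_half_pos hx
  have hs1 : Real.sin (x/2) ≤ 1 := Real.sin_le_one _
  have hc : |Real.cos (x/2)| ≤ 1 := Real.abs_cos_le_one _
  have hcsq : Real.cos (x/2) ^ 2 ≤ 1 := by
    have := Real.sin_sq_add_cos_sq (x/2); nlinarith
  have hr3 : (0:ℝ) ≤ Real.sin (x/2) ^ (p-3) := Real.rpow_nonneg hs.le _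
  have hr1 : Real.sin (x/2) ^ (p-1) ≤ Real.sin (x/2) ^ (p-3) :=
    Real.rpow_le_rpow_of_exponent_ge hs hs1 (by linarith)
  have hA : |(p-1)*(p-2) * Real.sin (x/2) ^ (p-3) * Real.cos (x/2) ^ 2|
      ≤ |(p-1)*(p-2)| * Real.sin (x/2) ^ (p-3) := by
    rw [abs_mul, abs_mul, abs_of_nonneg hr3, abs_of_nonneg (sq_nonneg (Real.cos (x/2)))]
    have h1 : |(p-1)*(p-2)| * Real.sin (x/2) ^ (p-3) * Real.cos (x/2) ^ 2
        ≤ |(p-1)*(p-2)| * Real.sin (x/2) ^ (p-3) * 1 := by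
      apply mul_le_mul_of_nonneg_left hcsq (by positivity)
    simpa using h1
  have hB : |(3*p-2) * Real.sin (x/2) ^ (p-1)| ≤ |3*p-2| * Real.sin (x/2) ^ (p-3) := by
    rw [abs_mul, abs_of_nonneg (Real.rpow_nonneg hs.le _)]
    exact mul_le_mul_of_nonneg_left hr1 (abs_nonneg _)
  calc |hh3 p x| = (p/8) * |Real.cos (x/2)| * |(p-1)*(p-2) * Real.sin (x/2) ^ (p-3) * Real.cos (x/2) ^ 2
        - (3*p-2) * Real.sin (x/2) ^ (p-1)| := by
        unfold hh3
        rw [abs_mul, abs_mul, abs_of_nonneg (by positivity : (0:ℝ) ≤ p/8)]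
    _ ≤ (p/8) * 1 * (|(p-1)*(p-2) * Real.sin (x/2) ^ (p-3) * Real.cos (x/2) ^ 2|
          + |(3*p-2) * Real.sin (x/2) ^ (p-1)|) := by
        apply mul_le_mul (by apply mul_le_mul_of_nonneg_left hc (by positivity))
          (abs_sub _ _) (abs_nonneg _) (by positivity)
    _ ≤ (p/8) * 1 * (|(p-1)*(p-2)| * Real.sin (x/2) ^ (p-3) + |3*p-2| * Real.sin (x/2) ^ (p-3)) := by
        apply mul_le_mul_of_nonneg_left (add_le_add hA hB) (by positivity)
    _ = Kp p * Real.sin (x/2) ^ (p-3) := by unfold Kp; ring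

lemma sin_half_ge {x : ℝ} (hx : x ∈ Set.Icc 0 (2*Real.pi)) :
    min x (2*Real.pi - x) / Real.pi ≤ Real.sin (x/2) := by
  have hpi := Real.pi_pos
  rcases le_total x Real.pi with h | h
  · calc min x (2*Real.pi - x) / Real.pi ≤ x / Real.pi := by
          apply div_le_div_of_nonneg_right (min_le_left _ _) hpi.le
      _ = 2/Real.pi * (x/2) := by ring
      _ ≤ Real.sin (x/2) := Real.mul_le_sin (by linarith [hx.1]) (by linarith)
  · have : Real.sin (x/2) = Real.sin ((2*Real.pi - x)/2) := by
      rw [show (2*Real.pi - x)/2 = Real.pi - x/2 by ring, Real.sin_pi_sub]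
    rw [this]
    calc min x (2*Real.pi - x) / Real.pi ≤ (2*Real.pi - x) / Real.pi := by
          apply div_le_div_of_nonneg_right (min_le_right _ _) hpi.le
      _ = 2/Real.pi * ((2*Real.pi - x)/2) := by ring
      _ ≤ Real.sin ((2*Real.pi - x)/2) := by
          apply Real.mul_le_sin (by linarith [hx.2]) (by linarith)

lemma diff3_bound (p : ℝ) {θ δ M : ℝ} (hδ : 0 ≤ δ) (hM : 0 ≤ M)
    (hsub : Set.Icc θ (θ+3*δ) ⊆ Set.Ioo 0 (2*Real.pi))
    (hbound : ∀ x ∈ Set.Icc θ (θ+3*δ), |hh3 p x| ≤ M) :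
    |hh p θ - 3*hh p (θ+δ) + 3*hh p (θ+2*δ) - hh p (θ+3*δ)| ≤ M * δ^3 := by
  set s := Set.Icc θ (θ+3*δ) with hs
  -- Step 1 : hh2 is M-Lipschitz on s
  have step1 : ∀ a ∈ s, ∀ b ∈ s, |hh2 p b - hh2 p a| ≤ M * |b - a| := by
    intro a ha b hb
    have := Convex.norm_image_sub_le_of_norm_hasDerivWithin_le
      (f := hh2 p) (f' := hh3 p) (s := s)
      (fun x hx => (hasDerivAt_hh2 p (hsub hx)).hasDerivWithinAt)
      (fun x hx => by simpa using hbound x hx) (convex_Icc _ _) ha hb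
    simpa [Real.norm_eq_abs] using this
  -- Step 2 : x ↦ hh1 (x+δ) - hh1 x  is (M*δ)-Lipschitz on Icc θ (θ+2δ)
  have step2 : ∀ a ∈ Set.Icc θ (θ+2*δ), ∀ b ∈ Set.Icc θ (θ+2*δ),
      |(hh1 p (b+δ) - hh1 p b) - (hh1 p (a+δ) - hh1 p a)| ≤ (M * δ) * |b - a| := by
    intro a ha b hb
    have hmem : ∀ x ∈ Set.Icc θ (θ+2*δ), x ∈ s ∧ x + δ ∈ s := by
      intro x hx
      exact ⟨⟨hx.1, by linarith [hx.2]⟩, ⟨by linarith [hx.1], by linarith [hx.2]⟩⟩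
    have hder : ∀ x ∈ Set.Icc θ (θ+2*δ),
        HasDerivWithinAt (fun y => hh1 p (y+δ) - hh1 p y)
          (hh2 p (x+δ) - hh2 p x) (Set.Icc θ (θ+2*δ)) x := by
      intro x hx
      have d1 : HasDerivAt (fun y => hh1 p (y+δ)) (hh2 p (x+δ)) x := by
        have := (hasDerivAt_hh1 p (hsub (hmem x hx).2)).comp x ((hasDerivAt_id x).add_const δ)
        simpa [Function.comp_def] using this
      exact ((d1.sub (hasDerivAt_hh1 p (hsub (hmem x hx).1))).hasDerivWithinAt)
    have hbd : ∀ x ∈ Set.Icc θ (θ+2*δ), ‖hh2 p (x+δ) - hh2 p x‖ ≤ M * δ := by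
      intro x hx
      have := step1 x (hmem x hx).1 (x+δ) (hmem x hx).2
      simpa [Real.norm_eq_abs, abs_of_nonneg hδ] using this
    have := Convex.norm_image_sub_le_of_norm_hasDerivWithin_le hder hbd (convex_Icc _ _) ha hb
    simpa [Real.norm_eq_abs] using this
  -- Step 3
  have hmem2 : ∀ x ∈ Set.Icc θ (θ+δ), x ∈ Set.Icc θ (θ+2*δ) ∧ x + δ ∈ Set.Icc θ (θ+2*δ) := by
    intro x hx
    exact ⟨⟨hx.1, by linarith [hx.2]⟩, ⟨by linarith [hx.1], by linarith [hx.2]⟩⟩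
  have hder3 : ∀ x ∈ Set.Icc θ (θ+δ),
      HasDerivWithinAt (fun y => hh p (y+2*δ) - 2*hh p (y+δ) + hh p y)
        ((hh1 p (x+δ+δ) - hh1 p (x+δ)) - (hh1 p (x+δ) - hh1 p x)) (Set.Icc θ (θ+δ)) x := by
    intro x hx
    have hxs : x ∈ s := ⟨hx.1, by linarith [hx.2]⟩
    have hxs1 : x + δ ∈ s := ⟨by linarith [hx.1], by linarith [hx.2]⟩
    have hxs2 : x + 2*δ ∈ s := ⟨by linarith [hx.1], by linarith [hx.2]⟩
    have d2 : HasDerivAt (fun y => hh p (y+2*δ)) (hh1 p (x+2*δ)) x := by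
      simpa [Function.comp_def] using (hasDerivAt_hh p (hsub hxs2)).comp x ((hasDerivAt_id x).add_const (2*δ))
    have d1 : HasDerivAt (fun y => hh p (y+δ)) (hh1 p (x+δ)) x := by
      simpa [Function.comp_def] using (hasDerivAt_hh p (hsub hxs1)).comp x ((hasDerivAt_id x).add_const δ)
    have d0 : HasDerivAt (hh p) (hh1 p x) x := hasDerivAt_hh p (hsub hxs)
    have := (d2.sub ((d1.const_mul (2:ℝ)))).add d0
    have heq : hh1 p (x+2*δ) - 2 * hh1 p (x+δ) + hh1 p x
        = (hh1 p (x+δ+δ) - hh1 p (x+δ)) - (hh1 p (x+δ) - hh1 p x) := by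
      rw [show x+δ+δ = x+2*δ by ring]; ring
    rw [← heq]
    exact this.hasDerivWithinAt
  have hbd3 : ∀ x ∈ Set.Icc θ (θ+δ),
      ‖(hh1 p (x+δ+δ) - hh1 p (x+δ)) - (hh1 p (x+δ) - hh1 p x)‖ ≤ M * δ * δ := by
    intro x hx
    have := step2 x (hmem2 x hx).1 (x+δ) (hmem2 x hx).2
    simpa [Real.norm_eq_abs, abs_of_nonneg hδ] using this
  have hθ : θ ∈ Set.Icc θ (θ+δ) := ⟨le_refl _, by linarith⟩
  have hθδ : θ + δ ∈ Set.Icc θ (θ+δ) := ⟨by linarith, le_refl _⟩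
  have key := Convex.norm_image_sub_le_of_norm_hasDerivWithin_le hder3 hbd3
    (convex_Icc _ _) hθ hθδ
  rw [Real.norm_eq_abs, Real.norm_eq_abs] at key
  have : |θ + δ - θ| = δ := by rw [show θ + δ - θ = δ by ring, abs_of_nonneg hδ]
  rw [this] at key
  have heq2 : (hh p (θ+δ+2*δ) - 2*hh p (θ+δ+δ) + hh p (θ+δ))
      - (hh p (θ+2*δ) - 2*hh p (θ+δ) + hh p θ)
      = -(hh p θ - 3*hh p (θ+δ) + 3*hh p (θ+2*δ) - hh p (θ+3*δ)) := by
    rw [show θ+δ+2*δ = θ+3*δ by ring, show θ+δ+δ = θ+2*δ by ring]; ring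
  rw [heq2, abs_neg] at key
  calc |hh p θ - 3*hh p (θ+δ) + 3*hh p (θ+2*δ) - hh p (θ+3*δ)| ≤ M * δ * δ * δ := key
    _ = M * δ^3 := by ring

lemma cos_image_Ioo : Real.cos '' Set.Ioo 0 Real.pi = Set.Ioo (-1 : ℝ) 1 := by
  ext y
  constructor
  · rintro ⟨θ, hθ, rfl⟩
    constructor
    · have := Real.neg_one_le_cos θ
      rcases eq_or_lt_of_le this with h | h
      · exfalso
        have : Real.cos Real.pi = Real.cos θ := by rw [Real.cos_pi, h]
        have := Real.injOn_cos ⟨le_of_lt Real.pi_pos, le_refl _⟩ ⟨hθ.1.le, hθ.2.le⟩ this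
        exact absurd this (by linarith [hθ.2])
      · exact h
    · have := Real.cos_le_one θ
      rcases eq_or_lt_of_le this with h | h
      · exfalso
        have : Real.cos θ = Real.cos 0 := by rw [Real.cos_zero, h]
        have := Real.injOn_cos ⟨hθ.1.le, hθ.2.le⟩ ⟨le_refl _, Real.pi_pos.le⟩ this
        exact absurd this (by linarith [hθ.1])
      · exact h
  · intro hy
    refine ⟨Real.arccos y, ⟨?_, ?_⟩, Real.cos_arccos hy.1.le hy.2.le⟩
    · exact Real.arccos_pos.2 hy.2
    · have h1 := Real.arccos_le_pi y
      rcases eq_or_lt_of_le h1 with h | h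
      · exact absurd (Real.arccos_eq_pi.1 h) (by linarith [hy.1])
      · exact h

lemma two_rpow_half : (2:ℝ) * 2^(-(1/2):ℝ) = 2^((1/2):ℝ) := by
  have h := Real.rpow_add (by norm_num : (0:ℝ) < 2) 1 (-(1/2))
  rw [Real.rpow_one] at h
  rw [← h]; norm_num

lemma cov_pointwise (α : ℝ) (m : ℕ) {θ : ℝ} (hθ : θ ∈ Set.Ioo 0 Real.pi) :
    |(-Real.sin θ)| * ((1 - Real.cos θ)^α * (1 + Real.cos θ)^(-(1/2):ℝ)
      * (Polynomial.Chebyshev.T ℝ (m:ℤ)).eval (Real.cos θ))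
    = 2^(α+1/2) * (hh (1+2*α) θ * Real.cos (m*θ)) := by
  set s := Real.sin (θ/2) with hsdef
  set c := Real.cos (θ/2) with hcdef
  have hs : 0 < s := Real.sin_pos_of_pos_of_lt_pi (by linarith [hθ.1]) (by linarith [hθ.2, Real.pi_pos])
  have hc : 0 < c := Real.cos_pos_of_mem_Ioo ⟨by linarith [hθ.1, Real.pi_pos], by linarith [hθ.2]⟩
  have hpyth : s^2 + c^2 = 1 := Real.sin_sq_add_cos_sq _
  have hcosθ : Real.cos θ = 2*c^2 - 1 := by
    rw [show θ = 2*(θ/2) by ring, Real.cos_two_mul]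
  have hsinθ : Real.sin θ = 2*s*c := by
    rw [show θ = 2*(θ/2) by ring, Real.sin_two_mul]
  have h1 : 1 - Real.cos θ = 2*s^2 := by rw [hcosθ]; linarith
  have h2 : 1 + Real.cos θ = 2*c^2 := by rw [hcosθ]; ring
  have habs : |(-Real.sin θ)| = 2*s*c := by
    rw [abs_neg, hsinθ, abs_of_pos (by positivity)]
  have hT : (Polynomial.Chebyshev.T ℝ (m:ℤ)).eval (Real.cos θ) = Real.cos (m*θ) := by
    rw [Polynomial.Chebyshev.T_real_cos θ (m:ℤ)]
    norm_cast
  have e1 : (2*s^2)^α = 2^α * s^(2*α) := by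
    rw [Real.mul_rpow (by norm_num) (sq_nonneg s), ← Real.rpow_natCast s 2,
      ← Real.rpow_mul hs.le]
    norm_num [mul_comm]
  have e2 : (2*c^2)^(-(1/2):ℝ) = 2^(-(1/2):ℝ) * c⁻¹ := by
    rw [Real.mul_rpow (by norm_num) (sq_nonneg c), ← Real.rpow_natCast c 2,
      ← Real.rpow_mul hc.le]
    norm_num [Real.rpow_neg_one]
  have e3 : hh (1+2*α) θ = s^(1+2*α) := by
    rw [hh, abs_of_pos hs]
  have e4 : s^(2*α) * s = s^(1+2*α) := by
    rw [show (1+2*α) = 2*α+1 by ring, Real.rpow_add_one hs.ne']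
  rw [habs, h1, h2, hT, e1, e2, e3, ← e4]
  have e5 : 2*s*c * (2^α * s^(2*α) * (2^(-(1/2):ℝ) * c⁻¹) * Real.cos (m*θ))
      = (2 * 2^(-(1/2):ℝ) * 2^α) * (s^(2*α)*s * Real.cos (m*θ)) * (c * c⁻¹) := by ring
  rw [e5, mul_inv_cancel₀ hc.ne', two_rpow_half, ← Real.rpow_add (by norm_num : (0:ℝ) < 2),
    mul_one, show (1/2 + α) = α + 1/2 by ring]

lemma step_cov (α : ℝ) (m : ℕ) :
    ∫ x in (-1:ℝ)..1, (1-x)^α * (1+x)^(-(1/2):ℝ) * (Polynomial.Chebyshev.T ℝ (m:ℤ)).eval x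
      = 2^(α+1/2) * ∫ θ in (0:ℝ)..Real.pi, hh (1+2*α) θ * Real.cos (m*θ) := by
  have h1 : ∫ x in (-1:ℝ)..1, (1-x)^α * (1+x)^(-(1/2):ℝ) * (Polynomial.Chebyshev.T ℝ (m:ℤ)).eval x
      = ∫ x in Set.Ioo (-1:ℝ) 1, (1-x)^α * (1+x)^(-(1/2):ℝ) * (Polynomial.Chebyshev.T ℝ (m:ℤ)).eval x := by
    rw [intervalIntegral.integral_of_le (by norm_num : (-1:ℝ) ≤ 1),
      MeasureTheory.integral_Ioc_eq_integral_Ioo]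
  have h2 : ∫ x in Set.Ioo (-1:ℝ) 1, (1-x)^α * (1+x)^(-(1/2):ℝ) * (Polynomial.Chebyshev.T ℝ (m:ℤ)).eval x
      = ∫ θ in Set.Ioo (0:ℝ) Real.pi, |(-Real.sin θ)| •
          ((1-Real.cos θ)^α * (1+Real.cos θ)^(-(1/2):ℝ)
            * (Polynomial.Chebyshev.T ℝ (m:ℤ)).eval (Real.cos θ)) := by
    rw [← cos_image_Ioo]
    exact MeasureTheory.integral_image_eq_integral_abs_deriv_smul measurableSet_Ioo
      (fun θ _ => (Real.hasDerivAt_cos θ).hasDerivWithinAt)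
      (Real.injOn_cos.mono (Set.Ioo_subset_Icc_self)) _
  have h3 : ∫ θ in Set.Ioo (0:ℝ) Real.pi, |(-Real.sin θ)| •
          ((1-Real.cos θ)^α * (1+Real.cos θ)^(-(1/2):ℝ)
            * (Polynomial.Chebyshev.T ℝ (m:ℤ)).eval (Real.cos θ))
      = ∫ θ in Set.Ioo (0:ℝ) Real.pi, 2^(α+1/2) * (hh (1+2*α) θ * Real.cos (m*θ)) := by
    apply MeasureTheory.setIntegral_congr_fun measurableSet_Ioo
    intro θ hθ
    simpa [smul_eq_mul] using cov_pointwise α m hθ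
  rw [h1, h2, h3, MeasureTheory.integral_const_mul,
    ← MeasureTheory.integral_Ioc_eq_integral_Ioo,
    ← intervalIntegral.integral_of_le Real.pi_pos.le]

lemma F_cont (p : ℝ) (hp : 0 ≤ p) (m : ℕ) :
    Continuous (fun θ => hh p θ * Real.cos (m*θ)) :=
  (hh_cont p hp).mul (Real.continuous_cos.comp (continuous_const.mul continuous_id))

lemma F_periodic (p : ℝ) (m : ℕ) :
    Function.Periodic (fun θ => hh p θ * Real.cos (m*θ)) (2*Real.pi) := by
  intro x
  simp only
  rw [hh_periodic p x]
  congr 1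
  have : (m:ℝ) * (x + 2*Real.pi) = m*x + (m:ℤ) * (2*Real.pi) := by push_cast; ring
  rw [this, Real.cos_add_int_mul_two_pi]

lemma reflect (p : ℝ) (hp : 0 ≤ p) (m : ℕ) :
    ∫ θ in (0:ℝ)..(2*Real.pi), hh p θ * Real.cos (m*θ)
      = 2 * ∫ θ in (0:ℝ)..Real.pi, hh p θ * Real.cos (m*θ) := by
  have hint : ∀ a b : ℝ, IntervalIntegrable (fun θ => hh p θ * Real.cos (m*θ)) volume a b :=
    fun a b => (F_cont p hp m).intervalIntegrable a b
  have hsplit := intervalIntegral.integral_add_adjacent_intervals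
    (hint 0 Real.pi) (hint Real.pi (2*Real.pi))
  have hrefl : ∫ θ in Real.pi..(2*Real.pi), hh p θ * Real.cos (m*θ)
      = ∫ θ in (0:ℝ)..Real.pi, hh p θ * Real.cos (m*θ) := by
    have := intervalIntegral.integral_comp_sub_left
      (a := (0:ℝ)) (b := Real.pi) (fun θ => hh p θ * Real.cos (m*θ)) (2*Real.pi)
    rw [show 2*Real.pi - Real.pi = Real.pi by ring, sub_zero] at this
    rw [← this]
    apply intervalIntegral.integral_congr
    intro x _
    simp only
    congr 1
    · simp only [hh]
      rw [show (2*Real.pi - x)/2 = Real.pi - x/2 by ring, Real.sin_pi_sub]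
    · rw [show (m:ℝ) * (2*Real.pi - x) = m*(2*Real.pi) - m*x by ring,
        Real.cos_nat_mul_two_pi_sub]
  rw [← hsplit, hrefl]
  ring

lemma cos_add_nat_pi (x : ℝ) (k : ℕ) : Real.cos (x + k*Real.pi) = (-1)^k * Real.cos x := by
  induction k with
  | zero => simp
  | succ n ih =>
    rw [show x + ((n:ℕ)+1:ℕ)*Real.pi = (x + n*Real.pi) + Real.pi by push_cast; ring,
      Real.cos_add_pi, ih]
    ring

lemma shift_k (p : ℝ) (hp : 0 ≤ p) (m k : ℕ) (hm : 1 ≤ m) :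
    ∫ θ in (0:ℝ)..(2*Real.pi), hh p (θ + k*(Real.pi/m)) * Real.cos (m*θ)
      = (-1)^k * ∫ θ in (0:ℝ)..(2*Real.pi), hh p θ * Real.cos (m*θ) := by
  have hmne : (m:ℝ) ≠ 0 := Nat.cast_ne_zero.2 (by omega)
  have hpt : ∀ θ : ℝ, hh p (θ + k*(Real.pi/m)) * Real.cos (m*θ)
      = (-1)^k * (hh p (θ + k*(Real.pi/m)) * Real.cos (m*(θ + k*(Real.pi/m)))) := by
    intro θ
    rw [show (m:ℝ)*(θ + k*(Real.pi/m)) = m*θ + k*Real.pi by field_simp,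
      cos_add_nat_pi]
    rw [show ((-1:ℝ))^k * (hh p (θ + k*(Real.pi/m)) * ((-1)^k * Real.cos (m*θ)))
      = ((-1:ℝ))^k * ((-1:ℝ))^k * (hh p (θ + k*(Real.pi/m)) * Real.cos (m*θ)) by ring,
      ← pow_add, Even.neg_one_pow ⟨k, by ring⟩, one_mul]
  rw [intervalIntegral.integral_congr (g := fun θ => (-1:ℝ)^k *
      (hh p (θ + k*(Real.pi/m)) * Real.cos (m*(θ + k*(Real.pi/m))))) (fun θ _ => hpt θ),
    intervalIntegral.integral_const_mul]
  congr 1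
  have hcomp := intervalIntegral.integral_comp_add_right
    (a := (0:ℝ)) (b := 2*Real.pi) (fun θ => hh p θ * Real.cos (m*θ)) (k*(Real.pi/m))
  rw [hcomp, zero_add]
  have := (F_periodic p m).intervalIntegral_add_eq (k*(Real.pi/m)) 0
  rw [zero_add] at this
  rw [show 2*Real.pi + k*(Real.pi/m) = k*(Real.pi/m) + 2*Real.pi by ring, this]

lemma hh_small (p : ℝ) (hp : 0 ≤ p) {x δ : ℝ} (hx0 : 0 ≤ x) (hx : x ≤ 4*δ) :
    hh p x ≤ (2*δ)^p := by
  apply hh_le p x _ hp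
  calc |Real.sin (x/2)| ≤ |x/2| := Real.abs_sin_le_abs
    _ = x/2 := abs_of_nonneg (by linarith)
    _ ≤ 2*δ := by linarith

lemma hh_small' (p : ℝ) (hp : 0 ≤ p) {x δ : ℝ} (hδ : 0 ≤ δ)
    (hx0 : 2*Real.pi - 4*δ ≤ x) (hx : x ≤ 2*Real.pi + 3*δ) :
    hh p x ≤ (2*δ)^p := by
  apply hh_le p x _ hp
  have : Real.sin (x/2) = -Real.sin (x/2 - Real.pi) := by
    rw [← Real.sin_add_pi]; ring_nf
  rw [this, abs_neg]
  calc |Real.sin (x/2 - Real.pi)| ≤ |x/2 - Real.pi| := Real.abs_sin_le_abs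
    _ ≤ 2*δ := by rw [abs_le]; constructor <;> [linarith; linarith]

lemma A_bound_ends (p : ℝ) (hp : 0 ≤ p) {θ δ : ℝ} (hδ : 0 ≤ δ)
    (h1 : hh p θ ≤ (2*δ)^p) (h2 : hh p (θ+δ) ≤ (2*δ)^p)
    (h3 : hh p (θ+2*δ) ≤ (2*δ)^p) (h4 : hh p (θ+3*δ) ≤ (2*δ)^p) :
    |hh p θ - 3*hh p (θ+δ) + 3*hh p (θ+2*δ) - hh p (θ+3*δ)| ≤ 8*(2*δ)^p := by
  have n1 := hh_nonneg p θ; have n2 := hh_nonneg p (θ+δ)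
  have n3 := hh_nonneg p (θ+2*δ); have n4 := hh_nonneg p (θ+3*δ)
  rw [abs_le]; constructor <;> nlinarith

lemma A_bound_mid (p : ℝ) (hp0 : 0 < p) (hp2 : p < 2) {θ δ : ℝ} (hδ : 0 < δ)
    (hθ1 : δ ≤ θ) (hθ2 : θ ≤ 2*Real.pi - 4*δ) :
    |hh p θ - 3*hh p (θ+δ) + 3*hh p (θ+2*δ) - hh p (θ+3*δ)|
      ≤ Kp p * Real.pi^(3-p) * δ^3 * (θ^(p-3) + (2*Real.pi-3*δ-θ)^(p-3)) := by
  have hπ := Real.pi_pos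
  set D := min θ (2*Real.pi - 3*δ - θ) with hD
  have hDpos : 0 < D := lt_min (by linarith) (by linarith)
  have hDθ : D ≤ θ := min_le_left _ _
  have hsub : Set.Icc θ (θ+3*δ) ⊆ Set.Ioo 0 (2*Real.pi) := by
    intro x hx
    exact ⟨by linarith [hx.1], by linarith [hx.2]⟩
  have hbound : ∀ x ∈ Set.Icc θ (θ+3*δ), |hh3 p x| ≤ Kp p * (D/Real.pi)^(p-3) := by
    intro x hx
    refine (hh3_bound hp0 (hsub hx)).trans ?_
    apply mul_le_mul_of_nonneg_left _ (Kp_nonneg hp0)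
    apply Real.rpow_le_rpow_of_nonpos (div_pos hDpos hπ) _ (by linarith)
    calc D/Real.pi ≤ min x (2*Real.pi - x)/Real.pi := by
          apply div_le_div_of_nonneg_right _ hπ.le
          exact le_min (le_min_iff.1 (le_refl D) |>.1.trans hx.1)
            (by have := hx.2; have := min_le_right θ (2*Real.pi - 3*δ - θ); linarith)
      _ ≤ Real.sin (x/2) := sin_half_ge ⟨by linarith [hx.1], by linarith [hx.2]⟩
  have key := diff3_bound p hδ.le (mul_nonneg (Kp_nonneg hp0) (Real.rpow_nonneg (div_pos hDpos hπ).le _)) hsub hbound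
  refine key.trans ?_
  have e1 : Kp p * (D/Real.pi)^(p-3) = Kp p * Real.pi^(3-p) * D^(p-3) := by
    rw [Real.div_rpow hDpos.le hπ.le, div_eq_mul_inv, ← Real.rpow_neg hπ.le,
      show -(p-3) = 3-p by ring]
    ring
  have e2 : D^(p-3) ≤ θ^(p-3) + (2*Real.pi-3*δ-θ)^(p-3) := by
    rcases min_cases θ (2*Real.pi - 3*δ - θ) with ⟨h, _⟩ | ⟨h, _⟩
    · rw [hD, h]
      have : (0:ℝ) ≤ (2*Real.pi-3*δ-θ)^(p-3) := Real.rpow_nonneg (by linarith) _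
      linarith
    · rw [hD, h]
      have : (0:ℝ) ≤ θ^(p-3) := Real.rpow_nonneg (by linarith) _
      linarith
  calc Kp p * (D/Real.pi)^(p-3) * δ^3 = Kp p * Real.pi^(3-p) * D^(p-3) * δ^3 := by rw [e1]
    _ ≤ Kp p * Real.pi^(3-p) * (θ^(p-3) + (2*Real.pi-3*δ-θ)^(p-3)) * δ^3 := by
        apply mul_le_mul_of_nonneg_right _ (by positivity)
        apply mul_le_mul_of_nonneg_left e2
        have : (0:ℝ) ≤ Real.pi^(3-p) := Real.rpow_nonneg hπ.le _
        exact mul_nonneg (Kp_nonneg hp0) this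
    _ = Kp p * Real.pi^(3-p) * δ^3 * (θ^(p-3) + (2*Real.pi-3*δ-θ)^(p-3)) := by ring

noncomputable def CC (p : ℝ) : ℝ := (1/8)*(40*2^p + 2*(Kp p)*Real.pi^(3-p)/(2-p))

lemma core (p : ℝ) (hp0 : 0 < p) (hp2 : p < 2) (m : ℕ) (hm : 12 ≤ m) :
    |∫ θ in (0:ℝ)..(2*Real.pi), hh p θ * Real.cos (m*θ)|
      ≤ CC p * (Real.pi/m)^(p+1) := by
  have hπ := Real.pi_pos
  have hm1 : 1 ≤ m := by omega
  have hmR : (12:ℝ) ≤ m := by exact_mod_cast hm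
  set δ := Real.pi/(m:ℝ) with hδdef
  have hδ : 0 < δ := div_pos hπ (by linarith)
  have hδ12 : 12*δ ≤ Real.pi := by
    have h1 : (12:ℝ)/m ≤ 1 := by
      rw [div_le_one (by linarith : (0:ℝ) < m)]; linarith
    calc 12*δ = 12/m*Real.pi := by rw [hδdef]; ring
      _ ≤ 1*Real.pi := mul_le_mul_of_nonneg_right h1 hπ.le
      _ = Real.pi := one_mul _
  -- continuity
  have h0cont : Continuous (hh p) := hh_cont p hp0.le
  have hcont : ∀ c : ℝ, Continuous (fun θ => hh p (θ + c)) :=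
    fun c => h0cont.comp (continuous_add_right c)
  have hcos : Continuous (fun θ : ℝ => Real.cos (m*θ)) :=
    Real.continuous_cos.comp (continuous_const.mul continuous_id)
  set A := fun θ => hh p θ - 3*hh p (θ+δ) + 3*hh p (θ+2*δ) - hh p (θ+3*δ) with hA
  have hAcont : Continuous A :=
    ((h0cont.sub (continuous_const.mul (hcont δ))).add
      (continuous_const.mul (hcont (2*δ)))).sub (hcont (3*δ))
  -- J = 8 I
  set I := ∫ θ in (0:ℝ)..(2*Real.pi), hh p θ * Real.cos (m*θ) with hI
  have hJ : ∫ θ in (0:ℝ)..(2*Real.pi), A θ * Real.cos (m*θ) = 8*I := by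
    have int0 : ∀ c : ℝ, IntervalIntegrable (fun θ => hh p (θ+c) * Real.cos (m*θ))
        volume 0 (2*Real.pi) := fun c => ((hcont c).mul hcos).intervalIntegrable _ _
    have expand : ∀ θ : ℝ, A θ * Real.cos (m*θ)
        = hh p (θ+0) * Real.cos (m*θ) - 3*(hh p (θ+δ) * Real.cos (m*θ))
          + 3*(hh p (θ+2*δ) * Real.cos (m*θ)) - hh p (θ+3*δ) * Real.cos (m*θ) := by
      intro θ; simp only [hA, add_zero]; ring
    rw [intervalIntegral.integral_congr (fun θ _ => expand θ)]
    rw [intervalIntegral.integral_sub (((int0 0).sub ((int0 δ).const_mul 3)).add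
        ((int0 (2*δ)).const_mul 3)) (int0 (3*δ)),
      intervalIntegral.integral_add ((int0 0).sub ((int0 δ).const_mul 3))
        ((int0 (2*δ)).const_mul 3),
      intervalIntegral.integral_sub (int0 0) ((int0 δ).const_mul 3),
      intervalIntegral.integral_const_mul, intervalIntegral.integral_const_mul]
    have S : ∀ k : ℕ, ∫ θ in (0:ℝ)..(2*Real.pi), hh p (θ + k*(Real.pi/(m:ℝ))) * Real.cos (m*θ)
        = (-1)^k * I := fun k => shift_k p hp0.le m k hm1
    have S0 := S 0; have S1 := S 1; have S2 := S 2; have S3 := S 3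
    norm_num at S0 S1 S2 S3
    rw [← hδdef] at S1 S2 S3
    simp only [add_zero]
    rw [← hI, S1, S2, S3]
    ring
  -- estimate
  have hd1 : (0:ℝ) ≤ δ := hδ.le
  have hd2 : δ ≤ 2*Real.pi - 4*δ := by linarith
  have hd3 : 2*Real.pi - 4*δ ≤ 2*Real.pi := by linarith
  have hintA : ∀ a b : ℝ, IntervalIntegrable (fun θ => |A θ|) volume a b :=
    fun a b => hAcont.abs.intervalIntegrable a b
  have hstep1 : |∫ θ in (0:ℝ)..(2*Real.pi), A θ * Real.cos (m*θ)|
      ≤ ∫ θ in (0:ℝ)..(2*Real.pi), |A θ| := by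
    calc |∫ θ in (0:ℝ)..(2*Real.pi), A θ * Real.cos (m*θ)|
        ≤ ∫ θ in (0:ℝ)..(2*Real.pi), |A θ * Real.cos (m*θ)| :=
          intervalIntegral.abs_integral_le_integral_abs (by linarith)
      _ ≤ ∫ θ in (0:ℝ)..(2*Real.pi), |A θ| := by
          apply intervalIntegral.integral_mono_on (by linarith)
            ((hAcont.mul hcos).abs.intervalIntegrable _ _) (hintA _ _)
          intro x _
          show |A x * Real.cos (m*x)| ≤ |A x|
          rw [abs_mul]
          calc |A x| * |Real.cos (m*x)| ≤ |A x| * 1 :=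
                mul_le_mul_of_nonneg_left (Real.abs_cos_le_one _) (abs_nonneg _)
            _ = |A x| := mul_one _
  have hsplit : ∫ θ in (0:ℝ)..(2*Real.pi), |A θ|
      = (∫ θ in (0:ℝ)..δ, |A θ|) + (∫ θ in δ..(2*Real.pi-4*δ), |A θ|)
        + ∫ θ in (2*Real.pi-4*δ)..(2*Real.pi), |A θ| := by
    rw [intervalIntegral.integral_add_adjacent_intervals (hintA 0 δ) (hintA δ (2*Real.pi-4*δ)),
      intervalIntegral.integral_add_adjacent_intervals (hintA 0 (2*Real.pi-4*δ))
        (hintA (2*Real.pi-4*δ) (2*Real.pi))]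
  have piece1 : ∫ θ in (0:ℝ)..δ, |A θ| ≤ 8*(2*δ)^p * δ := by
    calc ∫ θ in (0:ℝ)..δ, |A θ| ≤ ∫ _ in (0:ℝ)..δ, 8*(2*δ)^p := by
          apply intervalIntegral.integral_mono_on hδ.le (hintA _ _)
            (intervalIntegrable_const)
          intro x hx
          exact A_bound_ends p hp0.le hδ.le
            (hh_small p hp0.le hx.1 (by linarith [hx.2]))
            (hh_small p hp0.le (by linarith [hx.1]) (by linarith [hx.2]))
            (hh_small p hp0.le (by linarith [hx.1]) (by linarith [hx.2]))
            (hh_small p hp0.le (by linarith [hx.1]) (by linarith [hx.2]))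
      _ = 8*(2*δ)^p * δ := by rw [intervalIntegral.integral_const, smul_eq_mul]; ring
  have piece3 : ∫ θ in (2*Real.pi-4*δ)..(2*Real.pi), |A θ| ≤ 8*(2*δ)^p * (4*δ) := by
    calc ∫ θ in (2*Real.pi-4*δ)..(2*Real.pi), |A θ|
        ≤ ∫ _ in (2*Real.pi-4*δ)..(2*Real.pi), 8*(2*δ)^p := by
          apply intervalIntegral.integral_mono_on (by linarith) (hintA _ _)
            (intervalIntegrable_const)
          intro x hx
          exact A_bound_ends p hp0.le hδ.le
            (hh_small' p hp0.le hδ.le (by linarith [hx.1]) (by linarith [hx.2]))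
            (hh_small' p hp0.le hδ.le (by linarith [hx.1]) (by linarith [hx.2]))
            (hh_small' p hp0.le hδ.le (by linarith [hx.1]) (by linarith [hx.2]))
            (hh_small' p hp0.le hδ.le (by linarith [hx.1]) (by linarith [hx.2]))
      _ = 8*(2*δ)^p * (4*δ) := by rw [intervalIntegral.integral_const, smul_eq_mul]; ring
  -- middle piece
  have hint1 : IntervalIntegrable (fun θ : ℝ => θ^(p-3)) volume δ (2*Real.pi-4*δ) := by
    apply ContinuousOn.intervalIntegrable
    apply ContinuousOn.rpow_const continuousOn_id
    intro x hx
    rw [Set.uIcc_of_le hd2] at hx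
    exact Or.inl (by simp only [id]; intro h; rw [h] at hx; linarith [hx.1])
  have hint2 : IntervalIntegrable (fun θ : ℝ => (2*Real.pi-3*δ-θ)^(p-3)) volume δ (2*Real.pi-4*δ) := by
    apply ContinuousOn.intervalIntegrable
    apply ContinuousOn.rpow_const (continuousOn_const.sub continuousOn_id)
    intro x hx
    rw [Set.uIcc_of_le hd2] at hx
    refine Or.inl ?_
    simp only [Pi.sub_apply, id_eq]
    intro h
    have := hx.2
    linarith [hx.2, sub_eq_zero.1 h]
  have hS1 : ∫ θ in δ..(2*Real.pi-4*δ), θ^(p-3) ≤ δ^(p-2)/(2-p) := by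
    rw [integral_rpow (Or.inr ⟨by intro h; linarith [h], by
      rw [Set.uIcc_of_le hd2]; simp only [Set.mem_Icc]; push_neg; intro h; linarith⟩)]
    have hnn : (0:ℝ) ≤ (2*Real.pi-4*δ)^(p-3+1) := Real.rpow_nonneg (by linarith) _
    have key : ((2*Real.pi-4*δ)^(p-3+1) - δ^(p-3+1))/(p-3+1)
        = (δ^(p-3+1) - (2*Real.pi-4*δ)^(p-3+1))/(2-p) := by
      rw [show (p-3+1 : ℝ) = -(2-p) by ring, div_neg, ← neg_div, neg_sub]
    rw [key, show p-3+1 = p-2 by ring]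
    apply div_le_div_of_nonneg_right _ (by linarith : (0:ℝ) ≤ 2-p)
    linarith [Real.rpow_nonneg (show (0:ℝ) ≤ 2*Real.pi-4*δ by linarith) (p-2)]
  have hS2 : ∫ θ in δ..(2*Real.pi-4*δ), (2*Real.pi-3*δ-θ)^(p-3)
      = ∫ θ in δ..(2*Real.pi-4*δ), θ^(p-3) := by
    have := intervalIntegral.integral_comp_sub_left (a := δ) (b := 2*Real.pi-4*δ)
      (fun u : ℝ => u^(p-3)) (2*Real.pi-3*δ)
    rw [show 2*Real.pi-3*δ-(2*Real.pi-4*δ) = δ by ring,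
      show 2*Real.pi-3*δ-δ = 2*Real.pi-4*δ by ring] at this
    exact this
  have piece2 : ∫ θ in δ..(2*Real.pi-4*δ), |A θ|
      ≤ Kp p * Real.pi^(3-p) * δ^3 * (2*(δ^(p-2)/(2-p))) := by
    have hKπ : (0:ℝ) ≤ Kp p * Real.pi^(3-p) * δ^3 :=
      mul_nonneg (mul_nonneg (Kp_nonneg hp0) (Real.rpow_nonneg hπ.le _)) (by positivity)
    calc ∫ θ in δ..(2*Real.pi-4*δ), |A θ|
        ≤ ∫ θ in δ..(2*Real.pi-4*δ),
            Kp p * Real.pi^(3-p) * δ^3 * (θ^(p-3) + (2*Real.pi-3*δ-θ)^(p-3)) := by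
          apply intervalIntegral.integral_mono_on hd2 (hintA _ _)
            (((hint1.add hint2)).const_mul _)
          intro x hx
          exact A_bound_mid p hp0 hp2 hδ hx.1 hx.2
      _ = Kp p * Real.pi^(3-p) * δ^3 *
            ((∫ θ in δ..(2*Real.pi-4*δ), θ^(p-3))
              + ∫ θ in δ..(2*Real.pi-4*δ), (2*Real.pi-3*δ-θ)^(p-3)) := by
          rw [intervalIntegral.integral_const_mul, intervalIntegral.integral_add hint1 hint2]
      _ ≤ Kp p * Real.pi^(3-p) * δ^3 * (2*(δ^(p-2)/(2-p))) := by
          apply mul_le_mul_of_nonneg_left _ hKπ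
          rw [hS2]
          linarith [hS1]
  -- combine
  have habsI : |I| ≤ (1/8) * ((8*(2*δ)^p*δ) + (Kp p * Real.pi^(3-p) * δ^3 * (2*(δ^(p-2)/(2-p))))
      + (8*(2*δ)^p*(4*δ))) := by
    have h8 : |8*I| = 8*|I| := by rw [abs_mul]; norm_num
    have := hstep1
    rw [hJ, h8] at this
    rw [hsplit] at this
    linarith [piece1, piece2, piece3]
  -- algebraic form
  have e2δ : (2*δ)^p = 2^p * δ^p := Real.mul_rpow (by norm_num) hδ.le
  have eδ1 : δ^p * δ = δ^(p+1) := (Real.rpow_add_one hδ.ne' p).symm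
  have eδ2 : δ^(3:ℕ) * δ^(p-2) = δ^(p+1) := by
    rw [← Real.rpow_natCast δ 3, ← Real.rpow_add hδ]
    congr 1
    push_cast
    ring
  have hfinal : (1/8) * ((8*(2*δ)^p*δ) + (Kp p * Real.pi^(3-p) * δ^3 * (2*(δ^(p-2)/(2-p))))
      + (8*(2*δ)^p*(4*δ))) = CC p * δ^(p+1) := by
    rw [CC, e2δ]
    rw [show Kp p * Real.pi^(3-p) * δ^3 * (2*(δ^(p-2)/(2-p)))
      = 2 * Kp p * Real.pi^(3-p) / (2-p) * (δ^(3:ℕ) * δ^(p-2)) by ring]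
    rw [eδ2]
    rw [show (8:ℝ)*(2^p*δ^p)*δ = 8*2^p*(δ^p*δ) by ring,
      show (8:ℝ)*(2^p*δ^p)*(4*δ) = 32*2^p*(δ^p*δ) by ring, eδ1]
    ring
  rw [← hfinal]
  exact habsI

lemma CC_nonneg (p : ℝ) (hp0 : 0 < p) (hp2 : p < 2) : 0 ≤ CC p := by
  have h1 : (0:ℝ) ≤ 2^p := Real.rpow_nonneg (by norm_num) _
  have h2 : (0:ℝ) ≤ Kp p := Kp_nonneg hp0
  have h3 : (0:ℝ) ≤ Real.pi^(3-p) := Real.rpow_nonneg Real.pi_pos.le _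
  have h4 : (0:ℝ) < 2-p := by linarith
  unfold CC
  positivity

lemma trivial_bound (p : ℝ) (hp : 0 ≤ p) (m : ℕ) :
    |∫ θ in (0:ℝ)..Real.pi, hh p θ * Real.cos (m*θ)| ≤ Real.pi := by
  have h := intervalIntegral.norm_integral_le_of_norm_le_const (C := 1) (a := (0:ℝ))
    (b := Real.pi) (f := fun θ => hh p θ * Real.cos (m*θ)) ?_
  · rw [Real.norm_eq_abs] at h
    rw [sub_zero, abs_of_nonneg Real.pi_pos.le, one_mul] at h
    exact h
  · intro x _
    rw [Real.norm_eq_abs, abs_mul]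
    calc |hh p x| * |Real.cos (m*x)| ≤ 1 * 1 := by
          apply mul_le_mul _ (Real.abs_cos_le_one _) (abs_nonneg _) (by norm_num)
          rw [abs_of_nonneg (hh_nonneg p x)]
          exact hh_le_one p x hp
      _ = 1 := by norm_num

theorem modMoment_half_asymptotic (α : ℝ) (hα : -(1/2) < α) (hα' : α < 1/2) :
    ∃ C : ℝ, ∀ m : ℕ, 1 ≤ m →
      |∫ x in (-1:ℝ)..1,
          (1 - x) ^ α * (1 + x) ^ (-(1/2) : ℝ) * (Polynomial.Chebyshev.T ℝ m).eval x|
        ≤ C * (m : ℝ) ^ (-2 - 2 * α) := by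
  set p := 1 + 2*α with hpdef
  have hp0 : 0 < p := by rw [hpdef]; linarith
  have hp2 : p < 2 := by rw [hpdef]; linarith
  have hπ := Real.pi_pos
  have h2pow : (0:ℝ) < 2^(α+1/2) := Real.rpow_pos_of_pos (by norm_num) _
  set C1 : ℝ := 2^(α+1/2) * Real.pi * 1728 with hC1
  set C2 : ℝ := 2^(α+1/2) * CC p * Real.pi^(p+1) / 2 with hC2
  have hC1n : 0 ≤ C1 := by positivity
  have hC2n : 0 ≤ C2 := by
    have := CC_nonneg p hp0 hp2
    have : (0:ℝ) ≤ Real.pi^(p+1) := Real.rpow_nonneg hπ.le _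
    positivity
  refine ⟨C1 + C2, fun m hm => ?_⟩
  have hmR : (1:ℝ) ≤ m := by exact_mod_cast hm
  have hmpos : (0:ℝ) < m := by linarith
  have hrpos : (0:ℝ) < (m:ℝ)^(-2-2*α) := Real.rpow_pos_of_pos hmpos _
  rw [step_cov α m, abs_mul, abs_of_pos h2pow]
  rcases le_or_gt 12 m with h12 | h12
  · -- large m
    have hI2 := core p hp0 hp2 m h12
    have hrefl := reflect p hp0.le m
    have hhalf : |∫ θ in (0:ℝ)..Real.pi, hh p θ * Real.cos (m*θ)|
        ≤ CC p * (Real.pi/m)^(p+1) / 2 := by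
      have : |(2:ℝ) * ∫ θ in (0:ℝ)..Real.pi, hh p θ * Real.cos (m*θ)|
          ≤ CC p * (Real.pi/m)^(p+1) := by rw [← hrefl]; exact hI2
      rw [abs_mul, abs_of_nonneg (by norm_num : (0:ℝ) ≤ 2)] at this
      linarith [abs_nonneg (∫ θ in (0:ℝ)..Real.pi, hh p θ * Real.cos (m*θ))]
    have hpow : (Real.pi/m)^(p+1) = Real.pi^(p+1) * (m:ℝ)^(-2-2*α) := by
      rw [Real.div_rpow hπ.le hmpos.le]
      rw [show (-2-2*α : ℝ) = -(p+1) by rw [hpdef]; ring, Real.rpow_neg hmpos.le]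
      ring
    have hle : 2^(α+1/2) * |∫ θ in (0:ℝ)..Real.pi, hh (1+2*α) θ * Real.cos (m*θ)|
        ≤ C2 * (m:ℝ)^(-2-2*α) := by
      rw [hC2]
      calc 2^(α+1/2) * |∫ θ in (0:ℝ)..Real.pi, hh (1+2*α) θ * Real.cos (m*θ)|
          ≤ 2^(α+1/2) * (CC p * (Real.pi/m)^(p+1) / 2) :=
            mul_le_mul_of_nonneg_left hhalf h2pow.le
        _ = 2^(α+1/2) * CC p * Real.pi^(p+1) / 2 * (m:ℝ)^(-2-2*α) := by
            rw [hpow]; ring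
    calc 2^(α+1/2) * |∫ θ in (0:ℝ)..Real.pi, hh (1+2*α) θ * Real.cos (m*θ)|
        ≤ C2 * (m:ℝ)^(-2-2*α) := hle
      _ ≤ (C1 + C2) * (m:ℝ)^(-2-2*α) := by nlinarith
  · -- small m
    have htriv := trivial_bound p hp0.le m
    have hmle : (m:ℝ) ≤ 12 := by exact_mod_cast h12.le
    have hr1 : (m:ℝ)^(-3:ℝ) ≤ (m:ℝ)^(-2-2*α) :=
      Real.rpow_le_rpow_of_exponent_le hmR (by linarith)
    have hr2 : (12:ℝ)^(-3:ℝ) ≤ (m:ℝ)^(-3:ℝ) :=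
      Real.rpow_le_rpow_of_nonpos hmpos hmle (by norm_num)
    have hr3 : (12:ℝ)^(-3:ℝ) = 1/1728 := by
      rw [Real.rpow_neg (by norm_num), show (3:ℝ) = ((3:ℕ):ℝ) by norm_num,
        Real.rpow_natCast]
      norm_num
    have hle : 2^(α+1/2) * |∫ θ in (0:ℝ)..Real.pi, hh (1+2*α) θ * Real.cos (m*θ)|
        ≤ C1 * (m:ℝ)^(-2-2*α) := by
      calc 2^(α+1/2) * |∫ θ in (0:ℝ)..Real.pi, hh (1+2*α) θ * Real.cos (m*θ)|
          ≤ 2^(α+1/2) * Real.pi := mul_le_mul_of_nonneg_left htriv h2pow.le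
        _ = C1 * (1/1728) := by rw [hC1]; ring
        _ ≤ C1 * (m:ℝ)^(-2-2*α) := by
            apply mul_le_mul_of_nonneg_left _ hC1n
            rw [← hr3]
            linarith
    calc 2^(α+1/2) * |∫ θ in (0:ℝ)..Real.pi, hh (1+2*α) θ * Real.cos (m*θ)|
        ≤ C1 * (m:ℝ)^(-2-2*α) := hle
      _ ≤ (C1 + C2) * (m:ℝ)^(-2-2*α) := by nlinarith
end

section
/- (Second mean value theorem for integration, decreasing case) If G : [a,b] → ℝ is a positive monotonically decreasing function and φ : [a,b] → ℝ is integrable, then there exists ζ ∈ [a,b] such that ∫_a^b G(x)φ(x) dx = G(a⁺) ∫_a^ζ φ(x) dx, where G(a⁺) = lim_{x→a⁺} G(x). -/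
open MeasureTheory Filter Set Function

theorem second_mean_value_decreasing (a b : ℝ) (hab : a ≤ b) (G φ : ℝ → ℝ)
    (hGpos : ∀ x ∈ Set.Icc a b, 0 < G x)
    (hGdec : AntitoneOn G (Set.Icc a b))
    (hφ : IntervalIntegrable φ volume a b)
    (Ga : ℝ) (hGa : Tendsto G (nhdsWithin a (Set.Ioi a)) (nhds Ga)) :
    ∃ ζ ∈ Set.Icc a b, ∫ x in a..b, G x * φ x = Ga * ∫ x in a..ζ, φ x := by
  rcases eq_or_lt_of_le hab with rfl | hlt
  · exact ⟨a, ⟨le_rfl, le_rfl⟩, by simp⟩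
  -- primitive
  set F : ℝ → ℝ := fun z => ∫ x in a..z, φ x with hFdef
  have hFcont : ContinuousOn F (Icc a b) := by
    have := intervalIntegral.continuousOn_primitive_interval' hφ
      (Set.left_mem_uIcc (a := a) (b := b))
    rwa [Set.uIcc_of_le hab] at this
  -- clamp and the monotone function h
  set c : ℝ → ℝ := fun x => max a (min x b) with hcdef
  have hcmem : ∀ x, c x ∈ Icc a b := by
    intro x
    exact ⟨le_max_left _ _, max_le hab (min_le_right _ _)⟩
  have hcid : ∀ x ∈ Icc a b, c x = x := by
    intro x hx
    simp only [hcdef]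
    rw [min_eq_left hx.2, max_eq_right hx.1]
  set h : ℝ → ℝ := fun x => -G (c x) with hhdef
  have hmono : Monotone h := by
    intro x y hxy
    exact neg_le_neg (hGdec (hcmem x) (hcmem y)
      (max_le_max le_rfl (min_le_min hxy le_rfl)))
  set S := hmono.stieltjesFunction with hSdef
  have hSval : ∀ x, S x = rightLim h x := fun x => rfl
  -- basic comparisons between Ga and values of G
  have hGax : ∀ x ∈ Ioc a b, G x ≤ Ga := by
    intro x hx
    refine ge_of_tendsto hGa ?_
    filter_upwards [Ioc_mem_nhdsGT_of_mem ⟨le_rfl, hx.1⟩] with y hy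
    exact hGdec ⟨hy.1.le, hy.2.trans hx.2⟩ ⟨hx.1.le, hx.2⟩ hy.2
  have hGba : G b ≤ Ga := hGax b ⟨hlt, le_rfl⟩
  have hGaa : Ga ≤ G a := by
    refine le_of_tendsto hGa ?_
    filter_upwards [Ioo_mem_nhdsGT_of_mem ⟨le_rfl, hlt⟩] with y hy
    exact hGdec ⟨le_rfl, hab⟩ ⟨hy.1.le, hy.2.le⟩ hy.1.le
  have hGb0 : 0 < G b := hGpos b ⟨hab, le_rfl⟩
  have hGa0 : 0 < Ga := lt_of_lt_of_le hGb0 hGba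
  -- values of S
  have hSa : S a = -Ga := by
    rw [hSval]
    refine rightLim_eq_of_tendsto (h := nhdsGT_neBot a) ?_
    have : Tendsto G (nhdsWithin a (Set.Ioi a)) (nhds Ga) := hGa
    refine Tendsto.congr' ?_ this.neg
    filter_upwards [Ioo_mem_nhdsGT_of_mem (Set.left_mem_Ico.2 hlt)] with y hy
    simp [hhdef, hcid y ⟨hy.1.le, hy.2.le⟩]
  have hSb : S b = -G b := by
    rw [hSval]
    refine rightLim_eq_of_tendsto (h := nhdsGT_neBot b) ?_
    refine Tendsto.congr' ?_ tendsto_const_nhds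
    filter_upwards [self_mem_nhdsWithin] with y (hy : b < y)
    have : c y = b := by
      simp only [hcdef]
      rw [min_eq_right hy.le, max_eq_right hab]
    simp [hhdef, this]
  have hSlb : ∀ x, -G a ≤ S x := by
    intro x
    have h1 : h x ≤ S x := hmono.le_rightLim le_rfl
    have h2 : -G a ≤ h x := by
      simp only [hhdef, neg_le_neg_iff]
      exact hGdec ⟨le_rfl, hab⟩ (hcmem x) (hcmem x).1
    linarith
  have hSub : ∀ x, S x ≤ -G b := by
    intro x
    have h1 : S x ≤ h (x + 1) := hmono.rightLim_le (lt_add_one x)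
    have h2 : h (x + 1) ≤ -G b := by
      simp only [hhdef, neg_le_neg_iff]
      exact hGdec (hcmem (x + 1)) ⟨hab, le_rfl⟩ (hcmem (x + 1)).2
    linarith
  -- the function k
  set k : ℝ → ℝ := fun x => S x + Ga with hkdef
  have hkmeas : Measurable k := (S.mono.measurable).add_const Ga
  have hkbd : ∀ x, ‖k x‖ ≤ G a - G b := by
    intro x
    have h1 := hSlb x
    have h2 := hSub x
    rw [Real.norm_eq_abs, abs_le]
    constructor <;> simp only [hkdef] <;> linarith
  set μ := S.measure with hμdef
  set ν := μ.restrict (Ioc a b) with hνdef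
  haveI hνfin : IsFiniteMeasure ν := by
    constructor
    rw [hνdef, Measure.restrict_apply_univ, hμdef, S.measure_Ioc]
    exact ENNReal.ofReal_lt_top
  have hνtot : (ν Set.univ).toReal = Ga - G b := by
    rw [hνdef, Measure.restrict_apply_univ, hμdef, S.measure_Ioc, hSa, hSb,
      ENNReal.toReal_ofReal (by linarith)]
    ring
  have hkval : ∀ x, a ≤ x → (μ (Ioc a x)).toReal = k x := by
    intro x hax
    rw [hμdef, S.measure_Ioc, hSa, hkdef]
    have : S a ≤ S x := S.mono hax
    rw [ENNReal.toReal_ofReal (by rw [hSa] at this; linarith)]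
    ring
  -- a.e. identity G = Ga - k on Ioc a b
  have hGk : ∀ᵐ x ∂(volume.restrict (Ioc a b)), G x = Ga - k x := by
    have hE : (volume : Measure ℝ) ({x | ¬ContinuousAt h x} ∪ {b}) = 0 :=
      Set.Countable.measure_zero
        ((hmono.countable_not_continuousAt).union (Set.countable_singleton b)) _
    have hE' : ∀ᵐ x ∂(volume.restrict (Ioc a b)),
        x ∉ ({x | ¬ContinuousAt h x} ∪ {b} : Set ℝ) :=
      ae_restrict_of_ae (measure_eq_zero_iff_ae_notMem.1 hE)
    filter_upwards [ae_restrict_mem measurableSet_Ioc, hE'] with x hx hxE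
    have hxb : x ≠ b := fun hxb => hxE (Or.inr (by simp [hxb]))
    have hxc : ContinuousAt h x := by
      by_contra hc
      exact hxE (Or.inl hc)
    have hrl : S x = h x := by
      rw [hSval]
      exact rightLim_eq_of_tendsto (h := nhdsGT_neBot x)
        (hxc.tendsto.mono_left nhdsWithin_le_nhds)
    have hhx : h x = -G x := by
      simp [hhdef, hcid x ⟨hx.1.le, hx.2⟩]
    rw [hkdef]
    simp only
    rw [hrl, hhx]
    ring
  -- integrability facts
  have hφI : IntegrableOn φ (Ioc a b) volume := hφ.1
  have hkφ : Integrable (fun x => k x * φ x) (volume.restrict (Ioc a b)) :=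
    hφI.bdd_mul hkmeas.aestronglyMeasurable (c := G a - G b) (Eventually.of_forall hkbd)
  -- step: interval integral to set integral and a.e. rewrite
  have step1 : ∫ x in a..b, G x * φ x
      = Ga * F b - ∫ x in Ioc a b, k x * φ x := by
    rw [intervalIntegral.integral_of_le hab]
    have : ∫ x in Set.Ioc a b, G x * φ x
        = ∫ x in Set.Ioc a b, (Ga * φ x - k x * φ x) := by
      refine integral_congr_ae ?_
      filter_upwards [hGk] with x hx
      rw [hx]; ring
    rw [this, integral_sub (hφI.const_mul Ga) hkφ, integral_const_mul]
    congr 1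
    rw [hFdef]
    simp only
    rw [intervalIntegral.integral_of_le hab]
  -- Fubini setup
  set f : ℝ → ℝ → ℝ := fun x t => if t ≤ x then φ x else 0 with hfdef
  have hfeq : Function.uncurry f = ({p : ℝ × ℝ | p.2 ≤ p.1}).indicator (fun p => φ p.1) := by
    funext p
    simp [hfdef, Function.uncurry, Set.indicator_apply, Set.mem_setOf_eq]
  have hmeasset : MeasurableSet {p : ℝ × ℝ | p.2 ≤ p.1} :=
    measurableSet_le measurable_snd measurable_fst
  have hφfst : AEStronglyMeasurable (fun p : ℝ × ℝ => φ p.1)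
      ((volume.restrict (Ioc a b)).prod ν) :=
    (hφI.aestronglyMeasurable).comp_fst
  have hintf : Integrable (Function.uncurry f) ((volume.restrict (Ioc a b)).prod ν) := by
    rw [hfeq]
    have hbase : Integrable (fun p : ℝ × ℝ => φ p.1 * (1 : ℝ))
        ((volume.restrict (Ioc a b)).prod ν) :=
      Integrable.mul_prod hφI (integrable_const 1)
    have hbase' : Integrable (fun p : ℝ × ℝ => ‖φ p.1‖)
        ((volume.restrict (Ioc a b)).prod ν) := by simpa using hbase.norm
    refine Integrable.mono' hbase' (hφfst.indicator hmeasset) ?_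
    filter_upwards with p
    exact norm_indicator_le_norm_self (fun p : ℝ × ℝ => φ p.1) p
  have hswap := MeasureTheory.integral_integral_swap hintf
  have hlhs : (∫ x in Ioc a b, (∫ t, f x t ∂ν)) = ∫ x in Ioc a b, k x * φ x := by
    refine integral_congr_ae ?_
    filter_upwards [ae_restrict_mem measurableSet_Ioc] with x hx
    have hfx : f x = (Iic x).indicator (fun _ => φ x) := by
      funext t
      simp [hfdef, Set.indicator_apply, Set.mem_Iic]
    rw [hfx, integral_indicator measurableSet_Iic, setIntegral_const]
    have hν : ν (Iic x) = μ (Ioc a x) := by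
      rw [hνdef, Measure.restrict_apply measurableSet_Iic]
      rw [Set.inter_comm, Set.Ioc_inter_Iic, min_eq_right hx.2]
    rw [measureReal_def, hν, smul_eq_mul, hkval x hx.1.le]
  have haemem : ∀ᵐ t ∂ν, t ∈ Ioc a b := by
    rw [hνdef]; exact ae_restrict_mem measurableSet_Ioc
  have hrhs : (∫ t, (∫ x in Ioc a b, f x t) ∂ν) = ∫ t, (F b - F t) ∂ν := by
    refine integral_congr_ae ?_
    filter_upwards [haemem] with t ht
    have h1 : (fun x => f x t) = (Ici t).indicator φ := by
      funext x
      simp [hfdef, Set.indicator_apply, Set.mem_Ici]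
    rw [h1, setIntegral_indicator measurableSet_Ici]
    have h2 : Ioc a b ∩ Ici t = Icc t b := by
      ext y
      simp only [Set.mem_inter_iff, Set.mem_Ioc, Set.mem_Ici, Set.mem_Icc]
      constructor
      · rintro ⟨⟨_, hyb⟩, hty⟩; exact ⟨hty, hyb⟩
      · rintro ⟨hty, hyb⟩; exact ⟨⟨lt_of_lt_of_le ht.1 hty, hyb⟩, hty⟩
    rw [h2, integral_Icc_eq_integral_Ioc, ← intervalIntegral.integral_of_le ht.2]
    have h3 : IntervalIntegrable φ volume a t :=
      hφ.mono_set (by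
        rw [Set.uIcc_of_le hab, Set.uIcc_of_le ht.1.le]
        exact Set.Icc_subset_Icc le_rfl ht.2)
    rw [hFdef]
    simp only
    exact (intervalIntegral.integral_interval_sub_left hφ h3).symm
  have hJ : (∫ x in Ioc a b, k x * φ x) = ∫ t, (F b - F t) ∂ν := by
    rw [← hlhs, hswap, hrhs]
  -- integrability of F w.r.t. ν
  have hνIcc : ν.restrict (Icc a b) = ν := by
    rw [hνdef, Measure.restrict_restrict measurableSet_Icc,
      Set.inter_eq_right.2 Set.Ioc_subset_Icc_self]
  have hFint : Integrable F ν := by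
    have h1 : IntegrableOn F (Icc a b) ν :=
      ContinuousOn.integrableOn_compact isCompact_Icc hFcont
    rwa [IntegrableOn, hνIcc] at h1
  have hI : ∫ x in a..b, G x * φ x = G b * F b + ∫ t, F t ∂ν := by
    rw [step1, hJ, integral_sub (integrable_const (F b)) hFint, integral_const,
      measureReal_def, hνtot, smul_eq_mul]
    ring
  -- extreme values of F
  obtain ⟨u, hu, humin⟩ := isCompact_Icc.exists_isMinOn (Set.nonempty_Icc.2 hab) hFcont
  obtain ⟨v, hv, hvmax⟩ := isCompact_Icc.exists_isMaxOn (Set.nonempty_Icc.2 hab) hFcont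
  have hbmem : b ∈ Icc a b := ⟨hab, le_rfl⟩
  have hlow : F u * (Ga - G b) ≤ ∫ t, F t ∂ν := by
    have h1 := integral_mono_ae (integrable_const (F u)) hFint
      (by filter_upwards [haemem] with t ht; exact humin ⟨ht.1.le, ht.2⟩)
    rwa [integral_const, measureReal_def, hνtot, smul_eq_mul, mul_comm] at h1
  have hhigh : (∫ t, F t ∂ν) ≤ F v * (Ga - G b) := by
    have h1 := integral_mono_ae hFint (integrable_const (F v))
      (by filter_upwards [haemem] with t ht; exact hvmax ⟨ht.1.le, ht.2⟩)
    rwa [integral_const, measureReal_def, hνtot, smul_eq_mul, mul_comm] at h1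
  have hIlow : F u * Ga ≤ ∫ x in a..b, G x * φ x := by
    rw [hI]
    have h1 : G b * F u ≤ G b * F b := mul_le_mul_of_nonneg_left (humin hbmem) hGb0.le
    have h2 : F u * Ga = G b * F u + F u * (Ga - G b) := by ring
    linarith
  have hIhigh : (∫ x in a..b, G x * φ x) ≤ F v * Ga := by
    rw [hI]
    have h1 : G b * F b ≤ G b * F v := mul_le_mul_of_nonneg_left (hvmax hbmem) hGb0.le
    have h2 : F v * Ga = G b * F v + F v * (Ga - G b) := by ring
    linarith
  -- intermediate value theorem
  set r : ℝ := (∫ x in a..b, G x * φ x) / Ga with hrdef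
  have hFuv : F u ≤ F v := humin hv
  have hrmem : r ∈ Icc (F u) (F v) := by
    constructor
    · rw [hrdef, le_div_iff₀ hGa0]; exact hIlow
    · rw [hrdef, div_le_iff₀ hGa0]; exact hIhigh
  have hsub : Set.uIcc u v ⊆ Icc a b := by
    rw [← Set.uIcc_of_le hab]
    exact Set.uIcc_subset_uIcc (by rwa [Set.uIcc_of_le hab]) (by rwa [Set.uIcc_of_le hab])
  have hiv := intermediate_value_uIcc (hFcont.mono hsub)
  have hrmem' : r ∈ Set.uIcc (F u) (F v) := by
    rw [Set.uIcc_of_le hFuv]; exact hrmem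
  obtain ⟨ζ, hζmem, hζ⟩ := hiv hrmem'
  refine ⟨ζ, hsub hζmem, ?_⟩
  have hgoal : Ga * F ζ = ∫ x in a..b, G x * φ x := by
    rw [hζ, hrdef, mul_comm, div_mul_cancel₀ _ hGa0.ne']
  exact hgoal.symm
end
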